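/- Let n ≥ 1, a, m ∈ ℝⁿ, ϱ = m − a, and let Φ(a) and Φ(m) be the companion matrices of a and m. Suppose every eigenvalue λ ∈ ℂ of Φ(a) satisfies Re λ = 0, and every eigenvalue λ ∈ ℂ of Φ(m) satisfies Re λ < 0. Then the matrix S ∈ Mₙ(ℝ) whose i-th row equals ϱᵀ(Φ(a) + Iₙ)Φ(a)^{i−1} for i = 1,…,n is invertible. -/

import Mathlib

open Matrix Polynomial

lemma isRoot_charpoly_of_eig {n : ℕ} (M : Matrix (Fin n) (Fin n) ℂ) (μ : ℂ)
    (v : Fin n → ℂ) (hv : v ≠ 0) (h : M *ᵥ v = μ • v) : M.charpoly.IsRoot μ := by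
  have hmap : (charmatrix M).map (eval μ) = μ • (1 : Matrix (Fin n) (Fin n) ℂ) - M := by
    ext i j
    by_cases hij : i = j <;>
      simp [charmatrix_apply, Matrix.map_apply, diagonal_apply, hij, Matrix.one_apply,
        Matrix.smul_apply, Matrix.sub_apply]
  have hdet : (μ • (1 : Matrix (Fin n) (Fin n) ℂ) - M).det = 0 := by
    rw [← Matrix.exists_mulVec_eq_zero_iff]
    refine ⟨v, hv, ?_⟩
    rw [sub_mulVec, smul_mulVec, one_mulVec, h, sub_self]
  have : M.charpoly.eval μ = ((charmatrix M).map (eval μ)).det := by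
    have := (evalRingHom μ).map_det (charmatrix M)
    simpa [Polynomial.coe_evalRingHom, Matrix.charpoly] using this
  simpa [Polynomial.IsRoot, this, hmap] using hdet

/-- The companion matrix `Φ(a)` of `a = (a₁, …, aₙ)`: superdiagonal entries `1`,
last row `(−a₁, …, −aₙ)`, all other entries `0`. -/
def companion {n : ℕ} (a : Fin n → ℝ) : Matrix (Fin n) (Fin n) ℝ :=
  Matrix.of fun i j =>
    if (i : ℕ) + 1 = n then -a j else if (j : ℕ) = (i : ℕ) + 1 then 1 else 0

/-- if every eigenvalue of `Φ(a)` has zero real part and every eigenvalue of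
`Φ(m)` has negative real part, then the matrix `S` whose `i`-th row is
`ϱᵀ(Φ(a) + Iₙ)Φ(a)^{i−1}` (with `ϱ = m − a`) is invertible. -/
theorem observability_matrix_invertible {n : ℕ} (hn : 1 ≤ n) (a m ϱ : Fin n → ℝ)
    (hϱ : ϱ = m - a)
    (ha : ∀ lam : ℂ, ((companion a).charpoly.map (algebraMap ℝ ℂ)).IsRoot lam → lam.re = 0)
    (hm : ∀ lam : ℂ, ((companion m).charpoly.map (algebraMap ℝ ℂ)).IsRoot lam → lam.re < 0)
    (S : Matrix (Fin n) (Fin n) ℝ)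
    (hS : S = Matrix.of fun (i j : Fin n) =>
      Matrix.vecMul ϱ ((companion a + 1) * companion a ^ (i : ℕ)) j) :
    IsUnit S := by
  classical
  by_contra hSu
  set f : ℝ →+* ℂ := algebraMap ℝ ℂ with hf
  set A : Matrix (Fin n) (Fin n) ℂ := (companion a).map f with hA
  set B : Matrix (Fin n) (Fin n) ℂ := (companion m).map f with hB
  set r : Fin n → ℂ := fun j => f (ϱ j) with hr
  -- determinant of the complexification vanishes
  have hdetS : S.det = 0 := by
    by_contra hd
    exact hSu ((Matrix.isUnit_iff_isUnit_det S).mpr (isUnit_iff_ne_zero.mpr hd))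
  have hdetT : (S.map f).det = 0 := by
    rw [← RingHom.mapMatrix_apply, ← RingHom.map_det, hdetS, map_zero]
  obtain ⟨x, hx0, hx⟩ := Matrix.exists_mulVec_eq_zero_iff.mpr hdetT
  -- the rows of the complexified S
  have hrow : ∀ i : Fin n, r ⬝ᵥ (((A + 1) * A ^ (i : ℕ)) *ᵥ x) = 0 := by
    intro i
    have h1 : ((companion a + 1) * companion a ^ (i : ℕ)).map f = (A + 1) * A ^ (i : ℕ) := by
      simp only [hA, ← RingHom.mapMatrix_apply, _root_.map_mul, map_pow, _root_.map_add, _root_.map_one]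
    have h2 : ∀ j, (S.map f) i j = Matrix.vecMul r ((A + 1) * A ^ (i : ℕ)) j := by
      intro j
      rw [Matrix.map_apply, hS, ← h1]
      exact RingHom.map_vecMul f ((companion a + 1) * companion a ^ (i : ℕ)) ϱ j
    have h3 : ((S.map f) *ᵥ x) i = 0 := by rw [hx]; rfl
    rw [Matrix.dotProduct_mulVec, ← h3]
    simp only [Matrix.mulVec, dotProduct]
    exact Finset.sum_congr rfl fun j _ => by rw [h2 j]
  -- u k = ϱᵀ Aᵏ x
  set u : ℕ → ℂ := fun k => r ⬝ᵥ (A ^ k *ᵥ x) with hu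
  have hrec : ∀ k < n, u (k + 1) = -u k := by
    intro k hk
    have := hrow ⟨k, hk⟩
    rw [add_mul, one_mul, ← pow_succ', Matrix.add_mulVec, dotProduct_add] at this
    have h4 : u (k + 1) + u k = 0 := this
    exact eq_neg_of_add_eq_zero_left h4
  -- Cayley–Hamilton
  set p : Polynomial ℂ := A.charpoly with hp
  have hpa : p = (companion a).charpoly.map f := by
    rw [hp, hA, Matrix.charpoly_map]
  have hpdeg : p.natDegree = n := by
    rw [hp, Matrix.charpoly_natDegree_eq_dim, Fintype.card_fin]
  have hCH : ∑ k ∈ Finset.range (n + 1), p.coeff k • A ^ k = 0 := by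
    have h := Matrix.aeval_self_charpoly A
    rwa [aeval_eq_sum_range' (by omega : p.natDegree < n + 1) A] at h
  have hulin : ∀ (N : ℕ) (c : ℕ → ℂ),
      r ⬝ᵥ ((∑ k ∈ Finset.range N, c k • A ^ k) *ᵥ x) = ∑ k ∈ Finset.range N, c k * u k := by
    intro N c
    have hsum : (∑ k ∈ Finset.range N, c k • A ^ k) *ᵥ x
        = ∑ k ∈ Finset.range N, c k • (A ^ k *ᵥ x) := by
      have h0 := map_sum (Matrix.mulVec.addMonoidHomLeft (m := Fin n) x)
        (fun k => c k • A ^ k) (Finset.range N)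
      have h1 : (∑ k ∈ Finset.range N, c k • A ^ k) *ᵥ x
          = ∑ k ∈ Finset.range N, (c k • A ^ k) *ᵥ x := h0
      rw [h1]
      exact Finset.sum_congr rfl fun k _ => smul_mulVec (c k) (A ^ k) x
    rw [hsum]
    simp only [dotProduct, Pi.smul_apply, smul_eq_mul, Finset.mul_sum,
      Finset.sum_apply]
    rw [Finset.sum_comm]
    refine Finset.sum_congr rfl fun k _ => ?_
    rw [hu]
    simp only [dotProduct, Finset.mul_sum]
    exact Finset.sum_congr rfl fun i _ => by ring
  have hCHu : ∑ k ∈ Finset.range (n + 1), p.coeff k * u k = 0 := by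
    rw [← hulin, hCH]
    simp
  have hsign : ∀ k ≤ n, u k = (-1) ^ k * u 0 := by
    intro k hk
    induction k with
    | zero => simp
    | succ k ih =>
      rw [hrec k (by omega), ih (by omega)]
      ring
  have hone : p.eval (-1) * u 0 = 0 := by
    have hev : p.eval (-1) = ∑ k ∈ Finset.range (n + 1), p.coeff k * (-1) ^ k := by
      rw [eval_eq_sum_range, hpdeg]
    calc p.eval (-1) * u 0
        = ∑ k ∈ Finset.range (n + 1), p.coeff k * ((-1) ^ k * u 0) := by
          rw [hev, Finset.sum_mul]
          exact Finset.sum_congr rfl fun k _ => by ring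
      _ = ∑ k ∈ Finset.range (n + 1), p.coeff k * u k :=
          Finset.sum_congr rfl fun k hk => by
            rw [← hsign k (Nat.lt_succ_iff.mp (Finset.mem_range.mp hk))]
      _ = 0 := hCHu
  -- `-1` is not a root of `p`, hence `u 0 = 0`
  have hpne : p.eval (-1) ≠ 0 := by
    intro h0
    have : ((companion a).charpoly.map f).IsRoot (-1 : ℂ) := by rw [← hpa]; exact h0
    have := ha (-1) this
    simp at this
  have hu0 : u 0 = 0 := by
    rcases mul_eq_zero.mp hone with h | h
    · exact absurd h hpne
    · exact h
  have hulen : ∀ k ≤ n, u k = 0 := fun k hk => by rw [hsign k hk, hu0, mul_zero]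
  -- Cayley–Hamilton expansion of `A ^ n`
  have hcn : p.coeff n = 1 := by
    have := (Matrix.charpoly_monic A).coeff_natDegree
    rwa [← hp, hpdeg] at this
  have hAn : A ^ n = -∑ j ∈ Finset.range n, p.coeff j • A ^ j := by
    have h0 := hCH
    rw [Finset.sum_range_succ, hcn, one_smul] at h0
    exact eq_neg_of_add_eq_zero_right h0
  -- the Krylov subspace
  set g : Fin n → (Fin n → ℂ) := fun i => A ^ (i : ℕ) *ᵥ x with hg
  set K : Submodule ℂ (Fin n → ℂ) := Submodule.span ℂ (Set.range g) with hK
  have hgK : ∀ i : Fin n, g i ∈ K := fun i => Submodule.subset_span ⟨i, rfl⟩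
  have hxK : x ∈ K := by
    have h0 : g ⟨0, hn⟩ = x := by simp [hg]
    exact h0 ▸ hgK ⟨0, hn⟩
  have hKinv : ∀ v ∈ K, A.mulVecLin v ∈ K := by
    intro v hv
    induction hv using Submodule.span_induction with
    | mem v hv =>
      obtain ⟨i, rfl⟩ := hv
      have hmul : A.mulVecLin (g i) = A ^ ((i : ℕ) + 1) *ᵥ x := by
        rw [Matrix.mulVecLin_apply, hg, Matrix.mulVec_mulVec, ← pow_succ']
      by_cases hi : (i : ℕ) + 1 < n
      · rw [hmul]
        exact hgK ⟨(i : ℕ) + 1, hi⟩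
      · have hin : (i : ℕ) + 1 = n := by omega
        rw [hmul, hin]
        have h2 : A ^ n *ᵥ x = -∑ j ∈ Finset.range n, p.coeff j • (A ^ j *ᵥ x) := by
          rw [hAn]
          have h3 := map_sum (Matrix.mulVec.addMonoidHomLeft (m := Fin n) x)
            (fun k => p.coeff k • A ^ k) (Finset.range n)
          have h4 : (∑ k ∈ Finset.range n, p.coeff k • A ^ k) *ᵥ x
              = ∑ k ∈ Finset.range n, (p.coeff k • A ^ k) *ᵥ x := h3
          rw [Matrix.neg_mulVec, h4]
          congr 1
          exact Finset.sum_congr rfl fun k _ => smul_mulVec (p.coeff k) (A ^ k) x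
        rw [h2]
        refine K.neg_mem (Submodule.sum_mem K fun j hj => K.smul_mem _ ?_)
        exact hgK ⟨j, Finset.mem_range.mp hj⟩
    | zero => simp
    | add v w hv hw h1 h2 => simpa [Matrix.mulVec_add] using K.add_mem h1 h2
    | smul c v hv h1 => simpa [Matrix.mulVec_smul] using K.smul_mem c h1
  have hKann : ∀ v ∈ K, r ⬝ᵥ v = 0 := by
    intro v hv
    induction hv using Submodule.span_induction with
    | mem v hv =>
      obtain ⟨i, rfl⟩ := hv
      exact hulen (i : ℕ) (le_of_lt i.isLt)
    | zero => simp
    | add v w hv hw h1 h2 => rw [dotProduct_add, h1, h2, add_zero]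
    | smul c v hv h1 => rw [dotProduct_smul, h1, smul_zero]
  -- an eigenvector inside `K`
  haveI : Nontrivial K :=
    ⟨⟨x, hxK⟩, 0, fun h => hx0 (by simpa using congrArg Subtype.val h)⟩
  obtain ⟨μ, hμ⟩ := Module.End.exists_eigenvalue ((A.mulVecLin).restrict hKinv)
  obtain ⟨w, hw⟩ := hμ.exists_hasEigenvector
  have hw1 : A *ᵥ (w : Fin n → ℂ) = μ • (w : Fin n → ℂ) := by
    have h0 := hw.apply_eq_smul
    have h1 := congrArg Subtype.val h0
    simpa [LinearMap.restrict_apply, Matrix.mulVecLin_apply] using h1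
  have hwne : (w : Fin n → ℂ) ≠ 0 := fun h => hw.2 (Subtype.ext h)
  have hrw : r ⬝ᵥ (w : Fin n → ℂ) = 0 := hKann _ w.2
  -- μ is a purely imaginary eigenvalue of Φ(a)
  have hrootA : ((companion a).charpoly.map f).IsRoot μ := by
    rw [← Matrix.charpoly_map]
    exact isRoot_charpoly_of_eig A μ _ hwne hw1
  have hre0 : μ.re = 0 := ha μ hrootA
  -- μ is also an eigenvalue of Φ(m)
  have hBA : B *ᵥ (w : Fin n → ℂ) = A *ᵥ (w : Fin n → ℂ) := by
    funext i
    show ∑ j, B i j * w.1 j = ∑ j, A i j * w.1 j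
    by_cases hi : (i : ℕ) + 1 = n
    · have hterm : ∀ j, B i j * w.1 j = A i j * w.1 j - r j * w.1 j := by
        intro j
        rw [hB, hA, hr, Matrix.map_apply, Matrix.map_apply]
        simp only [companion, Matrix.of_apply, if_pos hi, hϱ, Pi.sub_apply]
        rw [map_neg, map_neg, map_sub]
        ring
      rw [Finset.sum_congr rfl fun j _ => hterm j, Finset.sum_sub_distrib]
      have hzero : ∑ j, r j * w.1 j = 0 := hrw
      rw [hzero, sub_zero]
    · refine Finset.sum_congr rfl fun j _ => ?_
      rw [hB, hA, Matrix.map_apply, Matrix.map_apply]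
      simp only [companion, Matrix.of_apply, if_neg hi]
  have hrootB : ((companion m).charpoly.map f).IsRoot μ := by
    rw [← Matrix.charpoly_map]
    exact isRoot_charpoly_of_eig B μ _ hwne (hBA.trans hw1)
  have := hm μ hrootB
  rw [hre0] at this
  exact lt_irrefl 0 this
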